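/- Taylor expansion with remainder for the normalized transformation: with Q, φ, Q^η, ∂_ηφ as above and defining ∂^k_ηφ(f) := (−1)^{k−1} k! [Q^η(1)^{⊗(k−1)} ⊗ ∂_ηφ(f)], for any probability measures ν, η and n ≥ 1: φ(ν) = φ(η) + ∑_{k=1}^n (1/k!)(ν−η)^{⊗k}∂^k_ηφ + (1/(n+1)!)(ν−η)^{⊗(n+1)} [ηQ^ν(1)·∂^{n+1}_ηφ], where (ν−η)^{⊗k} G denotes integration of the k-fold tensor product of the signed measure (ν−η) against the tensor-product integrand G. -/

import Mathlib

open MeasureTheory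

variable {S : Type*} [MeasurableSpace S]

/-- `Q(f)(x) = ∫ Q(x,dy) f(y)`. -/
noncomputable def opQ (Q : S → Measure S) (f : S → ℝ) (x : S) : ℝ := ∫ y, f y ∂(Q x)

/-- `ηQ(f) = ∫ η(dx) Q(f)(x)`. -/
noncomputable def measQ (Q : S → Measure S) (η : Measure S) (f : S → ℝ) : ℝ :=
  ∫ x, opQ Q f x ∂η

/-- `φ(η)(f) = ηQ(f)/ηQ(1)`. -/
noncomputable def phiQ (Q : S → Measure S) (η : Measure S) (f : S → ℝ) : ℝ :=
  measQ Q η f / measQ Q η (fun _ => (1 : ℝ))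

/-- The first order operator `∂_ηφ(f) = Q^η[f − φ(η)(f)]`, where
`Q^η := Q/(ηQ(1))`. -/
noncomputable def dphiQ (Q : S → Measure S) (η : Measure S) (f : S → ℝ) (x : S) : ℝ :=
  (opQ Q f x - phiQ Q η f * opQ Q (fun _ => (1 : ℝ)) x) / measQ Q η (fun _ => (1 : ℝ))

/-- Normalized operator `Q̄(f) := Q(f)/Q(1)`. -/
noncomputable def nbarQ (Q : S → Measure S) (f : S → ℝ) (x : S) : ℝ :=
  opQ Q f x / opQ Q (fun _ => (1 : ℝ)) x

/-- Taylor expansion with remainder for the normalized transformation `φ`.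
The contraction of the `k`-th differential
`∂^k_ηφ(f) = (−1)^{k−1} k! [Q^η(1)^{⊗(k−1)} ⊗ ∂_ηφ(f)]` against
`(ν−η)^{⊗k}` equals `(−1)^{k−1} k! a^{k−1} b`, where
`a = (ν−η)(Q^η(1))` and `b = (ν−η)(∂_ηφ(f))`; the remainder carries the extra
factor `ηQ^ν(1) = ηQ(1)/νQ(1)`. -/
lemma sum_aux (a b : ℝ) (n : ℕ) :
    ∑ k ∈ Finset.Icc 1 n, (1 / (k.factorial : ℝ)) *
      ((-1 : ℝ) ^ (k - 1) * (k.factorial : ℝ) * a ^ (k - 1) * b)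
    = (∑ j ∈ Finset.range n, (-a) ^ j) * b := by
  rw [← Finset.Ico_add_one_right_eq_Icc, Finset.sum_Ico_eq_sum_range, Finset.sum_mul]
  refine Finset.sum_congr (by simp) fun j _ => ?_
  have hf : ((1 + j).factorial : ℝ) ≠ 0 := Nat.cast_ne_zero.2 (Nat.factorial_ne_zero _)
  have h1 : (1 + j) - 1 = j := by omega
  rw [h1, neg_pow]
  field_simp
  ring

lemma alg_aux (A B F G : ℝ) (n : ℕ) (hA : A ≠ 0) (hB : B ≠ 0) :
    G / B = F / A
      + (∑ j ∈ Finset.range n, (-(B / A - A / A)) ^ j) * ((G - F / A * B) / A)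
      + 1 / (((n + 1).factorial : ℝ)) *
          (A / B * ((-1 : ℝ) ^ n * (((n + 1).factorial : ℝ)) * (B / A - A / A) ^ n
            * ((G - F / A * B) / A))) := by
  have hfac : (((n + 1).factorial : ℝ)) ≠ 0 := Nat.cast_ne_zero.2 (Nat.factorial_ne_zero _)
  have hAA : A / A = 1 := div_self hA
  rw [hAA]
  have hr : (-(B / A - 1) : ℝ) ≠ 1 := by
    intro h
    apply hB
    have h2 : B / A = 0 := by linarith
    field_simp at h2
    simpa using h2
  rw [geom_sum_eq hr]
  have key : (-(B / A - 1) : ℝ) ^ n = (-1 : ℝ) ^ n * (B / A - 1) ^ n := neg_pow _ _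
  rw [key]
  have h1 : (-(B / A - 1) - 1 : ℝ) = -(B / A) := by ring
  rw [h1]
  generalize (-1 : ℝ) ^ n = u
  generalize (B / A - 1 : ℝ) ^ n = s
  field_simp
  ring

theorem taylor_expansion_phi (Q : S → Measure S) (η ν : Measure S)
    [IsProbabilityMeasure η] [IsProbabilityMeasure ν] (f : S → ℝ) (n : ℕ) (hn : 1 ≤ n)
    (hη : 0 < measQ Q η (fun _ => (1 : ℝ))) (hν : 0 < measQ Q ν (fun _ => (1 : ℝ)))
    (hfη : Integrable (opQ Q f) η) (h1η : Integrable (opQ Q (fun _ => (1 : ℝ))) η)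
    (hfν : Integrable (opQ Q f) ν) (h1ν : Integrable (opQ Q (fun _ => (1 : ℝ))) ν) :
    phiQ Q ν f
      = phiQ Q η f
        + (∑ k ∈ Finset.Icc 1 n,
            (1 / (k.factorial : ℝ)) *
              ((-1 : ℝ) ^ (k - 1) * (k.factorial : ℝ)
                * ((∫ x, opQ Q (fun _ => (1 : ℝ)) x / measQ Q η (fun _ => (1 : ℝ)) ∂ν)
                    - ∫ x, opQ Q (fun _ => (1 : ℝ)) x / measQ Q η (fun _ => (1 : ℝ)) ∂η) ^ (k - 1)
                * ((∫ x, dphiQ Q η f x ∂ν) - ∫ x, dphiQ Q η f x ∂η)))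
        + (1 / ((n + 1).factorial : ℝ)) *
            ((measQ Q η (fun _ => (1 : ℝ)) / measQ Q ν (fun _ => (1 : ℝ)))
              * ((-1 : ℝ) ^ n * ((n + 1).factorial : ℝ)
                * ((∫ x, opQ Q (fun _ => (1 : ℝ)) x / measQ Q η (fun _ => (1 : ℝ)) ∂ν)
                    - ∫ x, opQ Q (fun _ => (1 : ℝ)) x / measQ Q η (fun _ => (1 : ℝ)) ∂η) ^ n
                * ((∫ x, dphiQ Q η f x ∂ν) - ∫ x, dphiQ Q η f x ∂η))) := by
  have hA0 : measQ Q η (fun _ => (1 : ℝ)) ≠ 0 := ne_of_gt hη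
  have hB0 : measQ Q ν (fun _ => (1 : ℝ)) ≠ 0 := ne_of_gt hν
  have hJν : (∫ x, opQ Q (fun _ => (1 : ℝ)) x / measQ Q η (fun _ => (1 : ℝ)) ∂ν)
      = measQ Q ν (fun _ => (1 : ℝ)) / measQ Q η (fun _ => (1 : ℝ)) := by
    rw [integral_div]; rfl
  have hJη : (∫ x, opQ Q (fun _ => (1 : ℝ)) x / measQ Q η (fun _ => (1 : ℝ)) ∂η)
      = measQ Q η (fun _ => (1 : ℝ)) / measQ Q η (fun _ => (1 : ℝ)) := by
    rw [integral_div]; rfl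
  have hdν : (∫ x, dphiQ Q η f x ∂ν)
      = (measQ Q ν f - measQ Q η f / measQ Q η (fun _ => (1 : ℝ)) * measQ Q ν (fun _ => (1 : ℝ)))
          / measQ Q η (fun _ => (1 : ℝ)) := by
    simp only [dphiQ, phiQ]
    rw [integral_div, integral_sub hfν (h1ν.const_mul _), integral_const_mul]
    rfl
  have hdη : (∫ x, dphiQ Q η f x ∂η) = 0 := by
    simp only [dphiQ, phiQ]
    rw [integral_div, integral_sub hfη (h1η.const_mul _), integral_const_mul]
    show (measQ Q η f - measQ Q η f / measQ Q η (fun _ => (1 : ℝ)) * measQ Q η (fun _ => (1 : ℝ)))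
        / measQ Q η (fun _ => (1 : ℝ)) = 0
    rw [div_mul_cancel₀ _ hA0, sub_self, zero_div]
  rw [hJν, hJη, hdν, hdη, sub_zero, sum_aux]
  show measQ Q ν f / measQ Q ν (fun _ => (1 : ℝ))
      = measQ Q η f / measQ Q η (fun _ => (1 : ℝ)) + _ + _
  exact alg_aux _ _ _ _ n hA0 hB0
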